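/- Let ρ and τ be multiplicative representations of a Hom-Lie algebra L on (V,β) and (W,γ) that are nilpotent with nilindices n and m respectively (i.e. any composition of n values of ρ vanishes, and similarly for τ and m). Then the tensor product representation ρ⊗τ, given by (ρ⊗τ)(x) = ρ(x)⊗γ + β⊗τ(x), is nilpotent of index at most n+m−1: for any x₁,…,x_{n+m−1} ∈ L, (ρ⊗τ)(x₁)∘⋯∘(ρ⊗τ)(x_{n+m−1}) = 0. -/

import Mathlib

open TensorProduct

variable {K L V W : Type*} [Field K] [AddCommGroup L] [Module K L]
  [AddCommGroup V] [Module K V] [AddCommGroup W] [Module K W]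

/-- The tensor product of two representations of a Hom-Lie algebra:
`(ρ⊗τ)(x) = ρ(x)⊗γ + β⊗τ(x)`. -/
noncomputable def tpRep (ρ : L →ₗ[K] Module.End K V) (τ : L →ₗ[K] Module.End K W)
    (β : Module.End K V) (γ : Module.End K W) (x : L) : Module.End K (V ⊗[K] W) :=
  TensorProduct.map (ρ x) γ + TensorProduct.map β (τ x)

namespace Stmt8Aux

/-- all boolean lists of length k -/
def allBool : ℕ → List (List Bool)
  | 0 => [[]]
  | k + 1 => ((allBool k).map (true :: ·)) ++ ((allBool k).map (false :: ·))

lemma allBool_len : ∀ k, ∀ c ∈ allBool k, c.length = k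
  | 0, c, hc => by simp [allBool] at hc; simp [hc]
  | k + 1, c, hc => by
    simp only [allBool, List.mem_append, List.mem_map] at hc
    rcases hc with ⟨d, hd, rfl⟩ | ⟨d, hd, rfl⟩ <;>
      simp [allBool_len k d hd]

lemma countP_not : ∀ l : List Bool, l.countP (fun b => b) + l.countP (fun b => !b) = l.length
  | [] => by simp
  | b :: l => by
    simp only [List.countP_cons, List.length_cons]
    have := countP_not l
    cases b <;> simp <;> omega

variable (ρ : L →ₗ[K] Module.End K V) (β : Module.End K V) (α : L →ₗ[K] L)

lemma comm_prod (hρm : ∀ x : L, ρ (α x) * β = β * ρ x) (zs : List L) :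
    β * (zs.map (fun x => ρ x)).prod = ((zs.map α).map (fun x => ρ x)).prod * β := by
  induction zs with
  | nil => simp
  | cons z zs ih =>
    simp only [List.map_cons, List.prod_cons]
    rw [← mul_assoc, ← hρm, mul_assoc, ih, ← mul_assoc]

lemma normal_form (hρm : ∀ x : L, ρ (α x) * β = β * ρ x) (w : List (Option L)) :
    ∃ (zs : List L) (c : Module.End K V), zs.length = w.countP (fun o => o.isSome) ∧
      (w.map (fun o => o.elim β (fun x => ρ x))).prod = (zs.map (fun x => ρ x)).prod * c := by
  induction w with
  | nil => exact ⟨[], 1, by simp⟩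
  | cons o w ih =>
    obtain ⟨zs, c, hlen, heq⟩ := ih
    cases o with
    | some x =>
      refine ⟨x :: zs, c, by simp [List.countP_cons, hlen], ?_⟩
      simp only [List.map_cons, List.prod_cons, Option.elim_some, heq, mul_assoc]
    | none =>
      refine ⟨zs.map α, β * c, by simp [List.countP_cons, hlen], ?_⟩
      simp only [List.map_cons, List.prod_cons, Option.elim_none, heq]
      rw [← mul_assoc, comm_prod ρ β α hρm, mul_assoc]

lemma word_zero (hρm : ∀ x : L, ρ (α x) * β = β * ρ x) (n : ℕ)
    (hn : ∀ xs : List L, xs.length = n → (xs.map (fun x => ρ x)).prod = 0)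
    (w : List (Option L)) (hw : n ≤ w.countP (fun o => o.isSome)) :
    (w.map (fun o => o.elim β (fun x => ρ x))).prod = 0 := by
  obtain ⟨zs, c, hlen, heq⟩ := normal_form ρ β α hρm w
  have hz : (zs.map (fun x => ρ x)).prod = 0 := by
    have h : zs = zs.take n ++ zs.drop n := (List.take_append_drop n zs).symm
    rw [h, List.map_append, List.prod_append, hn (zs.take n), zero_mul]
    rw [List.length_take]
    omega
  rw [heq, hz, zero_mul]

end Stmt8Aux

open Stmt8Aux in
/-- The tensor product of two nilpotent multiplicative representations, of
nilindices `n` and `m`, is nilpotent of index at most `n + m - 1`. -/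
theorem stmt8 (br : L →ₗ[K] L →ₗ[K] L) (α : L →ₗ[K] L)
    (hanti : ∀ x y : L, br y x = - br x y)
    (hjac : ∀ x y z : L,
      br (br x y) (α z) + br (br z x) (α y) + br (br y z) (α x) = 0)
    (ρ : L →ₗ[K] Module.End K V) (β : Module.End K V)
    (τ : L →ₗ[K] Module.End K W) (γ : Module.End K W)
    (hρ : ∀ x y : L, ρ (br x y) ∘ₗ β = ρ (α x) ∘ₗ ρ y - ρ (α y) ∘ₗ ρ x)
    (hρm : ∀ x : L, ρ (α x) ∘ₗ β = β ∘ₗ ρ x)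
    (hτ : ∀ x y : L, τ (br x y) ∘ₗ γ = τ (α x) ∘ₗ τ y - τ (α y) ∘ₗ τ x)
    (hτm : ∀ x : L, τ (α x) ∘ₗ γ = γ ∘ₗ τ x)
    (n m : ℕ)
    (hn : ∀ xs : List L, xs.length = n → (xs.map (fun x => ρ x)).prod = 0)
    (hm : ∀ xs : List L, xs.length = m → (xs.map (fun x => τ x)).prod = 0) :
    ∀ xs : List L, xs.length = n + m - 1 →
      (xs.map (tpRep ρ τ β γ)).prod = 0 := by
  have hρm' : ∀ x : L, ρ (α x) * β = β * ρ x := fun x => hρm x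
  have hτm' : ∀ x : L, τ (α x) * γ = γ * τ x := fun x => hτm x
  -- the two "word" maps
  set gV : Option L → Module.End K V := fun o => o.elim β (fun x => ρ x) with hgV
  set gW : Option L → Module.End K W := fun o => o.elim γ (fun x => τ x) with hgW
  set Aw : List L → List Bool → Module.End K V := fun xs c =>
    (((xs.zip c).map (fun p => if p.2 then some p.1 else none)).map gV).prod with hAw
  set Bw : List L → List Bool → Module.End K W := fun xs c =>
    (((xs.zip c).map (fun p => if p.2 then none else some p.1)).map gW).prod with hBw
  have mapmul : ∀ (f f' : Module.End K V) (g g' : Module.End K W),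
      TensorProduct.map f g * TensorProduct.map f' g' = TensorProduct.map (f * f') (g * g') := by
    intro f f' g g'
    rw [Module.End.mul_eq_comp, ← TensorProduct.map_comp]
    rfl
  -- expansion lemma
  have expand : ∀ xs : List L,
      (xs.map (tpRep ρ τ β γ)).prod =
        ((allBool xs.length).map (fun c => TensorProduct.map (Aw xs c) (Bw xs c))).sum := by
    intro xs
    induction xs with
    | nil => simp [allBool, Aw, Bw]
    | cons x xs ih =>
      simp only [List.map_cons, List.prod_cons, ih, List.length_cons]
      rw [show allBool (xs.length + 1) =
        ((allBool xs.length).map (true :: ·)) ++ ((allBool xs.length).map (false :: ·)) from rfl]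
      rw [List.map_append, List.sum_append, List.map_map, List.map_map]
      have h1 : ∀ c : List Bool,
          Aw (x :: xs) (true :: c) = ρ x * Aw xs c ∧ Bw (x :: xs) (true :: c) = γ * Bw xs c := by
        intro c; constructor <;> simp [Aw, Bw, List.zip_cons_cons, gV, gW]
      have h2 : ∀ c : List Bool,
          Aw (x :: xs) (false :: c) = β * Aw xs c ∧ Bw (x :: xs) (false :: c) = τ x * Bw xs c := by
        intro c; constructor <;> simp [Aw, Bw, List.zip_cons_cons, gV, gW]
      have e1 : ((fun c => TensorProduct.map (Aw (x :: xs) c) (Bw (x :: xs) c)) ∘ (true :: ·))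
          = fun c => TensorProduct.map (ρ x) γ * TensorProduct.map (Aw xs c) (Bw xs c) := by
        funext c
        simp only [Function.comp_apply, (h1 c).1, (h1 c).2, mapmul]
      have e2 : ((fun c => TensorProduct.map (Aw (x :: xs) c) (Bw (x :: xs) c)) ∘ (false :: ·))
          = fun c => TensorProduct.map β (τ x) * TensorProduct.map (Aw xs c) (Bw xs c) := by
        funext c
        simp only [Function.comp_apply, (h2 c).1, (h2 c).2, mapmul]
      rw [e1, e2, List.sum_map_mul_left, List.sum_map_mul_left, tpRep, add_mul]
  -- auxiliary counting lemma
  have ccount : ∀ (p : List Bool → Prop), True := fun _ => trivial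
  clear ccount
  intro xs hxs
  rw [expand xs]
  apply List.sum_eq_zero
  intro t ht
  obtain ⟨c, hc, rfl⟩ := List.mem_map.1 ht
  have hclen : c.length = xs.length := allBool_len _ c hc
  have hzlen : c.length ≤ xs.length := le_of_eq hclen
  have hsnd : (xs.zip c).map Prod.snd = c := List.map_snd_zip hzlen
  have hcntA : (((xs.zip c).map (fun p => if p.2 then some p.1 else none)).countP
      (fun o => o.isSome)) = c.countP (fun b => b) := by
    have h2 : c.countP (fun b => b) = (xs.zip c).countP ((fun b : Bool => b) ∘ Prod.snd) := by
      rw [← List.countP_map, hsnd]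
    rw [List.countP_map, h2]
    apply List.countP_congr
    intro p _
    cases hp : p.2 <;> simp [Function.comp, hp]
  have hcntB : (((xs.zip c).map (fun p => if p.2 then none else some p.1)).countP
      (fun o => o.isSome)) = c.countP (fun b => !b) := by
    have h2 : c.countP (fun b => !b) = (xs.zip c).countP ((fun b : Bool => !b) ∘ Prod.snd) := by
      rw [← List.countP_map, hsnd]
    rw [List.countP_map, h2]
    apply List.countP_congr
    intro p _
    cases hp : p.2 <;> simp [Function.comp, hp]
  have hcnt_add : c.countP (fun b => b) + c.countP (fun b => !b) = c.length :=
    countP_not c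
  by_cases hcase : n ≤ c.countP (fun b => b)
  · have hA0 : Aw xs c = 0 :=
      word_zero ρ β α hρm' n hn _ (by rw [hcntA]; exact hcase)
    rw [hAw] at hA0 ⊢
    rw [hA0, TensorProduct.map_zero_left]
  · have hmle : m ≤ c.countP (fun b => !b) := by omega
    have hB0 : Bw xs c = 0 :=
      word_zero τ γ α hτm' m hm _ (by rw [hcntB]; exact hmle)
    rw [hBw] at hB0 ⊢
    rw [hB0, TensorProduct.map_zero_right]
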